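/- arXiv:1204.5117 — 2 statements merged into one kernel-verified Lean document; each statement's English description precedes it below -/
import Mathlib

section
/- Let N, k, m be integers with k ≥ 1, m ≥ 2 and 2k ≤ N, and let λ be a partition with λ₁ ≤ m and at most k nonzero parts (i.e. λ ⊆ (m^k)). Let q₀, t₀ be nonzero complex numbers, neither of which is a root of unity, satisfying q₀^{m−1} t₀^{N−k+1} = 1 and, for every common divisor e > 1 of m−1 and N−k+1, q₀^{(m−1)/e} t₀^{(N−k+1)/e} ≠ 1. Then Π_{(i,j)∈λ} (1 − q₀^{λ_i − j} t₀^{λ'_j − i + 1}) ≠ 0. (This product is the hook normalization constant c_λ(q,t) = h_{q,t}(λ, t) of the integral form J_λ of the Macdonald polynomial, so the symmetric Macdonald polynomial P_λ has no pole at such parameter values.) -/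
open Finset

/-- The conjugate partition: `λ'_j = #{i : λ_i ≥ j}`. -/
def conjPart {k : ℕ} (lam : Fin k → ℕ) (j : ℕ) : ℕ :=
  (univ.filter fun i : Fin k => j ≤ lam i).card

private lemma pow_inj_of_not_root (q : ℂ) (hq : q ≠ 0)
    (hqru : ∀ r : ℕ, 0 < r → q ^ r ≠ 1) {x y : ℕ} (h : q ^ x = q ^ y) : x = y := by
  rcases le_total x y with hle | hle
  · by_contra hne
    have hpos : 0 < y - x := by omega
    have : q ^ x * q ^ (y - x) = q ^ x * 1 := by
      rw [mul_one, ← pow_add]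
      rw [h]; congr 1; omega
    have := mul_left_cancel₀ (pow_ne_zero x hq) this
    exact hqru _ hpos this
  · by_contra hne
    have hpos : 0 < x - y := by omega
    have : q ^ y * q ^ (x - y) = q ^ y * 1 := by
      rw [mul_one, ← pow_add]
      rw [← h]; congr 1; omega
    have := mul_left_cancel₀ (pow_ne_zero y hq) this
    exact hqru _ hpos this

private lemma key_no_relation (M P : ℕ) (hM : 1 ≤ M) (q t : ℂ) (hq : q ≠ 0) (ht : t ≠ 0)
    (hqru : ∀ r : ℕ, 0 < r → q ^ r ≠ 1)
    (hrel : q ^ M * t ^ P = 1)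
    (hmin : ∀ e : ℕ, 1 < e → e ∣ M → e ∣ P → q ^ (M / e) * t ^ (P / e) ≠ 1)
    (a b : ℕ) (hb1 : 1 ≤ b) (hbP : b < P) (h : q ^ a * t ^ b = 1) : False := by
  have hP : 0 < P := lt_of_le_of_lt (Nat.zero_le _) hbP
  -- q^(aP) = q^(Mb)
  have h1 : q ^ (a * P) * t ^ (b * P) = 1 := by
    have := congrArg (· ^ P) h
    simpa [mul_pow, ← pow_mul] using this
  have h2 : q ^ (M * b) * t ^ (P * b) = 1 := by
    have := congrArg (· ^ b) hrel
    simpa [mul_pow, ← pow_mul] using this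
  have hqq : q ^ (a * P) = q ^ (M * b) := by
    have : q ^ (a * P) * t ^ (b * P) = q ^ (M * b) * t ^ (b * P) := by
      rw [h1]; rw [show b * P = P * b from Nat.mul_comm b P]; rw [h2]
    exact mul_right_cancel₀ (pow_ne_zero _ ht) this
  have heq : a * P = M * b := pow_inj_of_not_root q hq hqru hqq
  -- a ≥ 1
  have ha1 : 1 ≤ a := by
    rcases Nat.eq_zero_or_pos a with h0 | h0
    · exfalso
      rw [h0, Nat.zero_mul] at heq
      rcases Nat.mul_eq_zero.mp heq.symm with h' | h' <;> omega
    · exact h0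
  -- a < M
  have haM : a < M := by
    have : a * P < M * P := by
      calc a * P = M * b := heq
        _ < M * P := by
            apply Nat.mul_lt_mul_of_le_of_lt (le_refl M) hbP (by omega)
    exact Nat.lt_of_mul_lt_mul_right this
  set g := Nat.gcd M P with hg
  have hgpos : 0 < g := Nat.gcd_pos_of_pos_left _ (by omega)
  set M' := M / g with hM'
  set P' := P / g with hP'
  have hMg : M = g * M' := (Nat.div_mul_cancel (Nat.gcd_dvd_left M P)).symm.trans (Nat.mul_comm _ _)
  have hPg : P = g * P' := (Nat.div_mul_cancel (Nat.gcd_dvd_right M P)).symm.trans (Nat.mul_comm _ _)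
  have hcop : Nat.Coprime M' P' := Nat.coprime_div_gcd_div_gcd hgpos
  have hM'pos : 0 < M' := by
    rcases Nat.eq_zero_or_pos M' with h0 | h0
    · exfalso; rw [h0, Nat.mul_zero] at hMg; omega
    · exact h0
  have hP'pos : 0 < P' := by
    rcases Nat.eq_zero_or_pos P' with h0 | h0
    · exfalso; rw [h0, Nat.mul_zero] at hPg; omega
    · exact h0
  -- a * P' = M' * b
  have heq' : a * P' = M' * b := by
    have : g * (a * P') = g * (M' * b) := by
      calc g * (a * P') = a * P := by rw [hPg]; ring
        _ = M * b := heq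
        _ = g * (M' * b) := by rw [hMg]; ring
    exact Nat.eq_of_mul_eq_mul_left hgpos this
  -- M' ∣ a
  have hdvd : M' ∣ a := by
    have : M' ∣ a * P' := ⟨b, heq'⟩
    exact (Nat.Coprime.dvd_of_dvd_mul_right hcop this)
  obtain ⟨s, hs⟩ := hdvd
  have hsb : b = s * P' := by
    have : M' * (s * P') = M' * b := by
      calc M' * (s * P') = (M' * s) * P' := by ring
        _ = a * P' := by rw [← hs]
        _ = M' * b := heq'
    exact (Nat.eq_of_mul_eq_mul_left hM'pos this).symm
  have hspos : 0 < s := by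
    rcases Nat.eq_zero_or_pos s with h0 | h0
    · exfalso; rw [h0, Nat.mul_zero] at hs; omega
    · exact h0
  have hsg : s < g := by
    have : M' * s < g * M' := by rw [← hs]; exact haM.trans_eq hMg
    nlinarith
  -- z := q^M' * t^P'
  set z := q ^ M' * t ^ P' with hz
  have hzs : z ^ s = 1 := by
    rw [hz, mul_pow, ← pow_mul, ← pow_mul, ← hs, Nat.mul_comm P' s, ← hsb]
    exact h
  have hzg : z ^ g = 1 := by
    rw [hz, mul_pow, ← pow_mul, ← pow_mul, Nat.mul_comm M' g, ← hMg, Nat.mul_comm P' g, ← hPg]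
    exact hrel
  set u := Nat.gcd s g with hu
  have hupos : 0 < u := Nat.gcd_pos_of_pos_left _ hspos
  have hzu : z ^ u = 1 := by
    have h1 : orderOf z ∣ s := orderOf_dvd_of_pow_eq_one hzs
    have h2 : orderOf z ∣ g := orderOf_dvd_of_pow_eq_one hzg
    exact orderOf_dvd_iff_pow_eq_one.mp (Nat.dvd_gcd h1 h2)
  have hug : u ∣ g := Nat.gcd_dvd_right s g
  obtain ⟨e, he⟩ := hug
  have hule : u ≤ s := Nat.le_of_dvd hspos (Nat.gcd_dvd_left s g)
  have he1 : 1 < e := by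
    rcases Nat.lt_or_ge 1 e with h' | h'
    · exact h'
    · exfalso; interval_cases e <;> omega
  have heM : e ∣ M := ⟨u * M', by rw [hMg, he]; ring⟩
  have heP : e ∣ P := ⟨u * P', by rw [hPg, he]; ring⟩
  have heMdiv : M / e = u * M' := by
    have : M = e * (u * M') := by rw [hMg, he]; ring
    rw [this, Nat.mul_div_cancel_left _ (by omega : 0 < e)]
  have hePdiv : P / e = u * P' := by
    have : P = e * (u * P') := by rw [hPg, he]; ring
    rw [this, Nat.mul_div_cancel_left _ (by omega : 0 < e)]
  apply hmin e he1 heM heP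
  rw [heMdiv, hePdiv]
  calc q ^ (u * M') * t ^ (u * P') = (q ^ M' * t ^ P') ^ u := by
        rw [mul_pow, ← pow_mul, ← pow_mul, Nat.mul_comm M' u, Nat.mul_comm P' u]
    _ = 1 := hzu

/-- Let `k ≥ 1`, `m ≥ 2`, `2k ≤ N`, and let `λ ⊆ (m^k)` be a partition
(`λ₁ ≤ m`, at most `k` nonzero parts).  If `q₀, t₀` are nonzero complex numbers, neither
a root of unity, with `q₀^{m−1} t₀^{N−k+1} = 1` and no lower-order such relation, then
`Π_{(i,j)∈λ} (1 − q₀^{λ_i−j} t₀^{λ'_j−i+1}) ≠ 0`, i.e. the hook normalization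
`c_λ(q,t) = h_{q,t}(λ,t)` does not vanish at `(q₀,t₀)`. -/
theorem subrectangular_hook_product_nonzero
    (N k m : ℕ) (hk : 1 ≤ k) (hm : 2 ≤ m) (hkN : 2 * k ≤ N)
    (lam : Fin k → ℕ) (hanti : Antitone lam) (hsub : ∀ i, lam i ≤ m)
    (q₀ t₀ : ℂ) (hq₀ : q₀ ≠ 0) (ht₀ : t₀ ≠ 0)
    (hqru : ∀ r : ℕ, 0 < r → q₀ ^ r ≠ 1) (htru : ∀ r : ℕ, 0 < r → t₀ ^ r ≠ 1)
    (hrel : q₀ ^ (m - 1) * t₀ ^ (N - k + 1) = 1)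
    (hmin : ∀ e : ℕ, 1 < e → e ∣ (m - 1) → e ∣ (N - k + 1) →
      q₀ ^ ((m - 1) / e) * t₀ ^ ((N - k + 1) / e) ≠ 1) :
    ∏ i : Fin k, ∏ j ∈ Icc 1 (lam i),
      (1 - q₀ ^ (lam i - j) * t₀ ^ (conjPart lam j - (i : ℕ))) ≠ 0 := by
  rw [Finset.prod_ne_zero_iff]
  intro i _
  rw [Finset.prod_ne_zero_iff]
  intro j hj
  rw [Finset.mem_Icc] at hj
  rw [sub_ne_zero]
  intro hcontra
  set a := lam i - j with ha
  set b := conjPart lam j - (i : ℕ) with hb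
  -- i < conjPart lam j
  have hic : (i : ℕ) < conjPart lam j := by
    have hsub' : Finset.Iic i ⊆ univ.filter fun i' : Fin k => j ≤ lam i' := by
      intro i' hi'
      rw [Finset.mem_Iic] at hi'
      rw [Finset.mem_filter]
      exact ⟨Finset.mem_univ _, le_trans hj.2 (hanti hi')⟩
    have hcard : (Finset.Iic i).card ≤ conjPart lam j := Finset.card_le_card hsub'
    have : (Finset.Iic i).card = (i : ℕ) + 1 := by
      simp [Fin.card_Iic]
    omega
  have hck : conjPart lam j ≤ k := by
    have := Finset.card_filter_le (univ : Finset (Fin k)) (fun i' : Fin k => j ≤ lam i')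
    simpa [conjPart] using this
  have hb1 : 1 ≤ b := by omega
  have hbP : b < N - k + 1 := by omega
  exact key_no_relation (m - 1) (N - k + 1) (by omega) q₀ t₀ hq₀ ht₀ hqru hrel hmin
    a b hb1 hbP hcontra.symm
end

section
/- Let N, k, m be integers with k ≥ 1, m ≥ 2 and 2k ≤ N, and let λ be a partition with λ₁ ≤ m, at most k nonzero parts, and λ ≠ (m^k) (i.e. λ strictly contained in (m^k)). Let q₀, t₀ be nonzero complex numbers, neither of which is a root of unity, satisfying q₀^{m−1} t₀^{N−k+1} = 1 and, for every common divisor e > 1 of m−1 and N−k+1, q₀^{(m−1)/e} t₀^{(N−k+1)/e} ≠ 1. Then Π_{(i,j)∈λ} (1 − q₀^{λ_i − j} t₀^{λ'_j − i + 1}) · (1 − q₀^{λ_i − j + 1} t₀^{λ'_j − i}) ≠ 0. (This product is the denominator of Lassalle's explicit formula for the (q,t)-binomial coefficient (m^k choose λ), so that binomial coefficient has no pole at such parameter values.) -/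
open Finset

private lemma pow_nat_inj {q : ℂ} (hq0 : q ≠ 0)
    (hq : ∀ r : ℕ, 0 < r → q ^ r ≠ 1) {x y : ℕ} (h : q ^ x = q ^ y) : x = y := by
  have main : ∀ x y : ℕ, x ≤ y → q ^ x = q ^ y → x = y := by
    intro x y hle h
    have h1 : q ^ x * q ^ (y - x) = q ^ x * 1 := by
      rw [← pow_add, Nat.add_sub_cancel' hle, ← h, mul_one]
    have h2 : q ^ (y - x) = 1 := mul_left_cancel₀ (pow_ne_zero _ hq0) h1
    have h3 : y - x = 0 := by
      by_contra hne
      exact hq _ (Nat.pos_of_ne_zero hne) h2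
    omega
  rcases le_total x y with hle | hle
  · exact main x y hle h
  · exact (main y x hle h.symm).symm

private lemma lassalle_key {q t : ℂ} {M P : ℕ} (hq0 : q ≠ 0) (ht0 : t ≠ 0)
    (hM : 0 < M) (hP : 0 < P)
    (hq : ∀ r : ℕ, 0 < r → q ^ r ≠ 1) (ht : ∀ r : ℕ, 0 < r → t ^ r ≠ 1)
    (hrel : q ^ M * t ^ P = 1)
    (hmin : ∀ e : ℕ, 1 < e → e ∣ M → e ∣ P → q ^ (M / e) * t ^ (P / e) ≠ 1)
    {a b : ℕ} (hb : b < P) (hab : q ^ a * t ^ b = 1) : a = 0 ∧ b = 0 := by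
  have h1 : q ^ (a * P) * t ^ (b * P) = 1 := by
    rw [pow_mul, pow_mul, ← mul_pow, hab, one_pow]
  have h2 : q ^ (M * b) * t ^ (b * P) = 1 := by
    rw [mul_comm b P, pow_mul, pow_mul, ← mul_pow, hrel, one_pow]
  have h3 : q ^ (a * P) = q ^ (M * b) :=
    mul_right_cancel₀ (pow_ne_zero _ ht0) (h1.trans h2.symm)
  have hMb : a * P = M * b := pow_nat_inj hq0 hq h3
  rcases Nat.eq_zero_or_pos b with hb0 | hbpos
  · subst hb0
    have : a * P = 0 := by simpa using hMb
    have ha0 : a = 0 := by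
      rcases Nat.mul_eq_zero.mp this with h | h
      · exact h
      · omega
    exact ⟨ha0, rfl⟩
  · exfalso
    set d := Nat.gcd M P with hd
    have hdM : d ∣ M := Nat.gcd_dvd_left M P
    have hdP : d ∣ P := Nat.gcd_dvd_right M P
    have hdpos : 0 < d := Nat.gcd_pos_of_pos_left _ hM
    obtain ⟨M', hM'⟩ := hdM
    obtain ⟨P', hP'⟩ := hdP
    have hcop : Nat.Coprime M' P' := by
      have := Nat.coprime_div_gcd_div_gcd (m := M) (n := P) hdpos
      rwa [← hd, hM', hP', Nat.mul_div_cancel_left _ hdpos,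
        Nat.mul_div_cancel_left _ hdpos] at this
    have hP'pos : 0 < P' := by
      rcases Nat.eq_zero_or_pos P' with h | h
      · rw [h, Nat.mul_zero] at hP'; omega
      · exact h
    have hM'pos : 0 < M' := by
      rcases Nat.eq_zero_or_pos M' with h | h
      · rw [h, Nat.mul_zero] at hM'; omega
      · exact h
    have h4 : a * P' = M' * b := by
      apply Nat.eq_of_mul_eq_mul_left hdpos
      have := hMb
      rw [hM', hP'] at this
      ring_nf at this ⊢
      linarith
    have hdvd : P' ∣ b := by
      refine (Nat.Coprime.dvd_of_dvd_mul_left hcop.symm ?_ : P' ∣ b)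
      exact ⟨a, by rw [← h4]; ring⟩
    obtain ⟨c, hc⟩ := hdvd
    have hcpos : 0 < c := by
      rcases Nat.eq_zero_or_pos c with h | h
      · rw [h, Nat.mul_zero] at hc; omega
      · exact h
    have hcd : c < d := by
      by_contra hge
      push_neg at hge
      have : P ≤ b := by
        calc P = d * P' := hP'
        _ ≤ c * P' := Nat.mul_le_mul_right _ hge
        _ = b := by rw [hc]; ring
      omega
    have ha : a = M' * c := by
      apply Nat.eq_of_mul_eq_mul_right hP'pos
      rw [h4, hc]; ring
    set x : ℂ := q ^ M' * t ^ P' with hx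
    have hxc : x ^ c = 1 := by
      rw [hx, mul_pow, ← pow_mul, ← pow_mul, ← ha, ← hc]
      exact hab
    have hxd : x ^ d = 1 := by
      rw [hx, mul_pow, ← pow_mul, ← pow_mul, mul_comm M' d, ← hM', mul_comm P' d, ← hP']
      exact hrel
    set g := Nat.gcd c d with hg
    have hxg : x ^ g = 1 := by
      have h5 : orderOf x ∣ c := orderOf_dvd_iff_pow_eq_one.mpr hxc
      have h6 : orderOf x ∣ d := orderOf_dvd_iff_pow_eq_one.mpr hxd
      exact orderOf_dvd_iff_pow_eq_one.mp (Nat.dvd_gcd h5 h6)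
    have hgdvd : g ∣ d := Nat.gcd_dvd_right c d
    obtain ⟨e, he⟩ := hgdvd
    have hgpos : 0 < g := Nat.gcd_pos_of_pos_left _ hcpos
    have hgc : g ≤ c := Nat.le_of_dvd hcpos (Nat.gcd_dvd_left c d)
    have hepos : 0 < e := by
      rcases Nat.eq_zero_or_pos e with h | h
      · rw [h, Nat.mul_zero] at he; omega
      · exact h
    have he1 : 1 < e := by
      by_contra hle
      push_neg at hle
      have he1' : e = 1 := by omega
      rw [he1', Nat.mul_one] at he
      omega
    have heM : M = e * (g * M') := by rw [hM', he]; ring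
    have heP : P = e * (g * P') := by rw [hP', he]; ring
    have heM' : M / e = g * M' := by rw [heM, Nat.mul_div_cancel_left _ hepos]
    have heP' : P / e = g * P' := by rw [heP, Nat.mul_div_cancel_left _ hepos]
    refine hmin e he1 ⟨g * M', heM⟩ ⟨g * P', heP⟩ ?_
    rw [heM', heP', mul_comm g M', mul_comm g P', pow_mul, pow_mul, ← mul_pow]
    exact hxg

/-- Let `k ≥ 1`, `m ≥ 2`, `2k ≤ N`, and let `λ ⊊ (m^k)` be a partition
strictly contained in the `k × m` rectangle.  If `q₀, t₀` are nonzero complex numbers,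
neither a root of unity, with `q₀^{m−1} t₀^{N−k+1} = 1` and no lower-order such relation,
then `Π_{(i,j)∈λ} (1 − q₀^{λ_i−j} t₀^{λ'_j−i+1})·(1 − q₀^{λ_i−j+1} t₀^{λ'_j−i}) ≠ 0`,
i.e. the denominator of Lassalle's formula for the (q,t)-binomial `(m^k choose λ)`
does not vanish at `(q₀,t₀)`. -/
theorem lassalle_binomial_denominator_nonzero
    (N k m : ℕ) (hk : 1 ≤ k) (hm : 2 ≤ m) (hkN : 2 * k ≤ N)
    (lam : Fin k → ℕ) (hanti : Antitone lam) (hsub : ∀ i, lam i ≤ m)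
    (hne : lam ≠ fun _ => m)
    (q₀ t₀ : ℂ) (hq₀ : q₀ ≠ 0) (ht₀ : t₀ ≠ 0)
    (hqru : ∀ r : ℕ, 0 < r → q₀ ^ r ≠ 1) (htru : ∀ r : ℕ, 0 < r → t₀ ^ r ≠ 1)
    (hrel : q₀ ^ (m - 1) * t₀ ^ (N - k + 1) = 1)
    (hmin : ∀ e : ℕ, 1 < e → e ∣ (m - 1) → e ∣ (N - k + 1) →
      q₀ ^ ((m - 1) / e) * t₀ ^ ((N - k + 1) / e) ≠ 1) :
    ∏ i : Fin k, ∏ j ∈ Icc 1 (lam i),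
      ((1 - q₀ ^ (lam i - j) * t₀ ^ (conjPart lam j - (i : ℕ))) *
        (1 - q₀ ^ (lam i - j + 1) * t₀ ^ (conjPart lam j - ((i : ℕ) + 1)))) ≠ 0 := by
  have hM : 0 < m - 1 := by omega
  have hP : 0 < N - k + 1 := by omega
  have key : ∀ a b : ℕ, b < N - k + 1 → q₀ ^ a * t₀ ^ b = 1 → a = 0 ∧ b = 0 :=
    fun a b hb hab => lassalle_key hq₀ ht₀ hM hP hqru htru hrel hmin hb hab
  refine prod_ne_zero_iff.mpr fun i _ => prod_ne_zero_iff.mpr fun j hj => ?_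
  simp only [mem_Icc] at hj
  have hconj_le : conjPart lam j ≤ k := by
    unfold conjPart
    exact (card_filter_le _ _).trans (by simp)
  have hconj_ge : (i : ℕ) + 1 ≤ conjPart lam j := by
    unfold conjPart
    have hsubset : Iic i ⊆ univ.filter fun i' : Fin k => j ≤ lam i' := by
      intro i' hi'
      simp only [mem_Iic] at hi'
      simp only [mem_filter, mem_univ, true_and]
      exact le_trans hj.2 (hanti hi')
    calc (i : ℕ) + 1 = (Iic i).card := by rw [Fin.card_Iic]
    _ ≤ _ := card_le_card hsubset
  have ik : (i : ℕ) < k := i.isLt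
  apply mul_ne_zero
  · intro h
    have heq : q₀ ^ (lam i - j) * t₀ ^ (conjPart lam j - (i : ℕ)) = 1 :=
      (sub_eq_zero.mp h).symm
    have hb : conjPart lam j - (i : ℕ) < N - k + 1 := by omega
    have := key _ _ hb heq
    omega
  · intro h
    have heq : q₀ ^ (lam i - j + 1) * t₀ ^ (conjPart lam j - ((i : ℕ) + 1)) = 1 :=
      (sub_eq_zero.mp h).symm
    have hb : conjPart lam j - ((i : ℕ) + 1) < N - k + 1 := by omega
    have := key _ _ hb heq
    omega
end
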